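/- Let A be an Artinian Gorenstein local (or graded) K-algebra and z ∈ A a non-unit. Let U_i and W_i (i = 1,…,s) be the subquotients defined from the nilpotent endomorphism ×z on A by U_i = (0:z^{f_i} + (z))/(0:z^{f_i−1} + (z)) and W_i = ((0:z) ∩ (z^{f_i−1}))/((0:z) ∩ (z^{f_i})), where f₁ > ⋯ > f_s are the distinct Jordan block sizes of ×z. Then Hom_A(U_i, A) ≅ W_i and Hom_A(W_i, A) ≅ U_i; in particular Hom_A(U_i, A) ≅ U_i. -/

import Mathlib

open Module LinearMap

section Aux

variable {A : Type*} [CommRing A]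

lemma ann_span_singleton (w : A) :
    (Ideal.span {w} : Ideal A).annihilator = ker (LinearMap.lsmul A A w) := by
  ext a
  rw [← Ideal.submodule_span_eq, Submodule.mem_annihilator_span_singleton, LinearMap.mem_ker]
  simp [smul_eq_mul, mul_comm]

lemma ann_sup (I J : Submodule A A) :
    (I ⊔ J).annihilator = I.annihilator ⊓ J.annihilator := by
  ext a
  simp only [Submodule.mem_annihilator, Submodule.mem_inf]
  constructor
  · exact fun h => ⟨fun n hn => h n (Submodule.mem_sup_left hn),
      fun n hn => h n (Submodule.mem_sup_right hn)⟩
  · rintro ⟨h1, h2⟩ n hn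
    obtain ⟨x, hx, y, hy, rfl⟩ := Submodule.mem_sup.1 hn
    rw [smul_add, h1 x hx, h2 y hy, add_zero]

/-- `Hom(A/J, A) ≃ ann J`. -/
noncomputable def homQuotEquiv (J : Ideal A) :
    ((A ⧸ J) →ₗ[A] A) ≃ₗ[A] J.annihilator where
  toFun φ := ⟨φ (Submodule.Quotient.mk 1), by
    rw [Submodule.mem_annihilator]
    intro n hn
    have h0 : (Submodule.Quotient.mk n : A ⧸ J) = 0 := (Submodule.Quotient.mk_eq_zero J).2 hn
    calc φ (Submodule.Quotient.mk 1) • n = n • φ (Submodule.Quotient.mk 1) := by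
          rw [smul_eq_mul, smul_eq_mul, mul_comm]
      _ = φ (n • (Submodule.Quotient.mk 1 : A ⧸ J)) := (φ.map_smul n _).symm
      _ = φ (Submodule.Quotient.mk n) := by
          rw [← Submodule.Quotient.mk_smul]; simp [smul_eq_mul]
      _ = 0 := by rw [h0, φ.map_zero]⟩
  map_add' φ ψ := by ext; simp
  map_smul' a φ := by ext; simp
  invFun a := Submodule.liftQ J (LinearMap.lsmul A A (a : A)) (by
    intro x hx
    rw [LinearMap.mem_ker, LinearMap.lsmul_apply]
    exact Submodule.mem_annihilator.1 a.2 x hx)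
  left_inv φ := by
    refine LinearMap.ext fun q => ?_
    obtain ⟨x, rfl⟩ := Submodule.Quotient.mk_surjective J q
    rw [Submodule.liftQ_apply, LinearMap.lsmul_apply, smul_eq_mul, mul_comm, ← smul_eq_mul,
      ← φ.map_smul]
    congr 1
    rw [← Submodule.Quotient.mk_smul]
    simp [smul_eq_mul]
  right_inv a := Subtype.ext (by dsimp only; rw [Submodule.liftQ_apply]; simp)

end Aux

section Inj

variable {A : Type*} [CommRing A] [Module.Injective A A]

/-- `Hom(N, A) ≃ A / ann N` for a submodule (ideal) `N ≤ A`, using self-injectivity. -/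
lemma homSubEquiv (N : Ideal A) :
    Nonempty ((↥N →ₗ[A] A) ≃ₗ[A] (A ⧸ N.annihilator)) := by
  let ρ : A →ₗ[A] (↥N →ₗ[A] A) :=
    { toFun := fun a => (LinearMap.lsmul A A a).comp N.subtype
      map_add' := by intro a b; ext x; simp [add_smul]
      map_smul' := by intro a b; ext x; simp [mul_smul, smul_eq_mul, mul_assoc] }
  have hker : ker ρ = N.annihilator := by
    ext a
    rw [LinearMap.mem_ker, Submodule.mem_annihilator]
    constructor
    · intro h n hn
      exact congrFun (congrArg DFunLike.coe h) ⟨n, hn⟩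
    · intro h
      ext x
      exact h x.1 x.2
  have hsurj : Function.Surjective ρ := by
    intro φ
    obtain ⟨h, hh⟩ := Module.Injective.out N.subtype N.injective_subtype φ
    refine ⟨h 1, ?_⟩
    ext x
    have : h x.1 = φ x := hh x
    simp only [ρ, LinearMap.coe_mk, AddHom.coe_mk, LinearMap.coe_comp, Function.comp_apply,
      Submodule.coe_subtype, LinearMap.lsmul_apply, smul_eq_mul]
    rw [mul_comm, ← smul_eq_mul, ← h.map_smul, smul_eq_mul, mul_one, this]
  exact ⟨((Submodule.quotEquivOfEq _ _ hker.symm).trans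
    (ρ.quotKerEquivOfSurjective hsurj)).symm⟩

lemma range_lsmul_eq_span (w : A) :
    LinearMap.range (LinearMap.lsmul A A w) = (Ideal.span {w} : Ideal A) := by
  ext a
  rw [LinearMap.mem_range, Ideal.mem_span_singleton]
  constructor
  · rintro ⟨y, rfl⟩; exact Dvd.intro _ rfl
  · rintro ⟨c, rfl⟩; exact ⟨c, rfl⟩

/-- `A ⧸ (0 : w) ≃ (w)` -/
noncomputable def quotKerEquivSpan (w : A) :
    (A ⧸ (ker (LinearMap.lsmul A A w) : Ideal A)) ≃ₗ[A] ↥(Ideal.span {w} : Ideal A) :=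
  (LinearMap.quotKerEquivRange (LinearMap.lsmul A A w)).trans
    (LinearEquiv.ofEq _ _ (range_lsmul_eq_span w))

end Inj

section FD

variable {A : Type*} [CommRing A] [Module.Injective A A]

lemma double_ann (K : Type*) [Field K] [Algebra K A] [FiniteDimensional K A] (w : A) :
    (ker (LinearMap.lsmul A A w) : Ideal A).annihilator = Ideal.span {w} := by
  set J : Ideal A := ker (LinearMap.lsmul A A w) with hJ
  have hle : (Ideal.span {w} : Ideal A) ≤ J.annihilator := by
    rw [Ideal.span_le]
    rintro x hx
    rw [Set.mem_singleton_iff] at hx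
    subst hx
    rw [SetLike.mem_coe, Submodule.mem_annihilator]
    intro n hn
    have := LinearMap.mem_ker.1 hn
    simpa [smul_eq_mul] using this
  obtain ⟨e4⟩ := homSubEquiv (Ideal.span {w} : Ideal A)
  have E : ↥(J.annihilator) ≃ₗ[A] ↥(Ideal.span {w} : Ideal A) :=
    (homQuotEquiv J).symm.trans <|
      (LinearEquiv.arrowCongr (quotKerEquivSpan w) (LinearEquiv.refl A A)).trans <|
      e4.trans <|
      (Submodule.quotEquivOfEq _ _ (by rw [ann_span_singleton])).trans (quotKerEquivSpan w)
  -- compare finranks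
  have hfr : finrank K ↥(J.annihilator) = finrank K ↥(Ideal.span {w} : Ideal A) :=
    LinearEquiv.finrank_eq (E.restrictScalars K)
  have hfr1 : finrank K ↥(Submodule.restrictScalars K (J.annihilator)) =
      finrank K ↥(J.annihilator) :=
    LinearEquiv.finrank_eq ((Submodule.restrictScalarsEquiv K A A _).restrictScalars K)
  have hfr2 : finrank K ↥(Submodule.restrictScalars K (Ideal.span {w} : Ideal A)) =
      finrank K ↥(Ideal.span {w} : Ideal A) :=
    LinearEquiv.finrank_eq ((Submodule.restrictScalarsEquiv K A A _).restrictScalars K)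
  have heq : Submodule.restrictScalars K (Ideal.span {w} : Ideal A) =
      Submodule.restrictScalars K (J.annihilator) := by
    apply Submodule.eq_of_le_of_finrank_le
    · intro x hx; exact hle hx
    · omega
  exact (Submodule.restrictScalars_injective K A A heq).symm

end FD

section Dual

variable {A : Type*} [CommRing A] [Module.Injective A A]

lemma dualIso (I J : Ideal A) (h : J ≤ I) :
    Nonempty (((↥I ⧸ Submodule.comap I.subtype J) →ₗ[A] A) ≃ₗ[A]
      (↥(J.annihilator) ⧸ Submodule.comap (J.annihilator).subtype I.annihilator)) := by
  set Q : Submodule A ↥I := Submodule.comap I.subtype J with hQ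
  have hker0 : ∀ a : ↥(J.annihilator),
      Q ≤ ker ((LinearMap.lsmul A A (a : A)).comp I.subtype) := by
    intro a x hx
    rw [LinearMap.mem_ker, LinearMap.comp_apply, LinearMap.lsmul_apply]
    exact Submodule.mem_annihilator.1 a.2 x.1 hx
  let Ψ : ↥(J.annihilator) →ₗ[A] ((↥I ⧸ Q) →ₗ[A] A) :=
    { toFun := fun a => Submodule.liftQ Q ((LinearMap.lsmul A A (a : A)).comp I.subtype) (hker0 a)
      map_add' := by
        intro a b
        refine Submodule.linearMap_qext _ ?_
        ext x
        simp [add_smul]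
      map_smul' := by
        intro c a
        refine Submodule.linearMap_qext _ ?_
        ext x
        simp [mul_smul, smul_eq_mul, mul_assoc] }
  have hkerΨ : ker Ψ = Submodule.comap (J.annihilator).subtype I.annihilator := by
    ext a
    rw [LinearMap.mem_ker, Submodule.mem_comap, Submodule.mem_annihilator]
    constructor
    · intro h0 n hn
      have := congrFun (congrArg DFunLike.coe h0) (Submodule.Quotient.mk ⟨n, hn⟩)
      simpa [Ψ] using this
    · intro h0
      refine Submodule.linearMap_qext _ ?_
      ext x
      exact h0 x.1 x.2
  have hsurj : Function.Surjective Ψ := by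
    intro φ
    obtain ⟨hmap, hh⟩ := Module.Injective.out I.subtype I.injective_subtype (φ.comp Q.mkQ)
    have key : ∀ x : ↥I, hmap x.1 = φ (Submodule.Quotient.mk x) := by
      intro x
      have := hh x
      simpa using this
    have hmem : hmap 1 ∈ J.annihilator := by
      rw [Submodule.mem_annihilator]
      intro n hn
      have h1 : hmap 1 • n = hmap n := by
        have hsm := hmap.map_smul n 1
        rw [smul_eq_mul, mul_one] at hsm
        rw [hsm, smul_eq_mul, smul_eq_mul, mul_comm]
      have h2 : hmap n = φ (Submodule.Quotient.mk ⟨n, h hn⟩) := key ⟨n, h hn⟩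
      have h3 : (Submodule.Quotient.mk (⟨n, h hn⟩ : ↥I) : ↥I ⧸ Q) = 0 :=
        (Submodule.Quotient.mk_eq_zero Q).2 hn
      rw [h1, h2, h3, φ.map_zero]
    refine ⟨⟨hmap 1, hmem⟩, ?_⟩
    refine Submodule.linearMap_qext _ ?_
    ext x
    have h1 : hmap 1 • x.1 = hmap x.1 := by
      have hsm := hmap.map_smul x.1 1
      rw [smul_eq_mul, mul_one] at hsm
      rw [hsm, smul_eq_mul, smul_eq_mul, mul_comm]
    simpa [Ψ, h1] using key x
  exact ⟨((Submodule.quotEquivOfEq _ _ hkerΨ.symm).trans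
    (Ψ.quotKerEquivOfSurjective hsurj)).symm⟩

end Dual

section UW

variable {A : Type*} [CommRing A]

lemma isoUW (z : A) (g : ℕ) :
    Nonempty (((ker (LinearMap.lsmul A A (z ^ (g + 1))) ⊔ Ideal.span {z} : Ideal A) ⧸
        Submodule.comap (ker (LinearMap.lsmul A A (z ^ (g + 1))) ⊔ Ideal.span {z} : Ideal A).subtype
          (ker (LinearMap.lsmul A A (z ^ g)) ⊔ Ideal.span {z})) ≃ₗ[A]
      ((ker (LinearMap.lsmul A A z) ⊓ Ideal.span {z ^ g} : Ideal A) ⧸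
        Submodule.comap (ker (LinearMap.lsmul A A z) ⊓ Ideal.span {z ^ g} : Ideal A).subtype
          (ker (LinearMap.lsmul A A z) ⊓ Ideal.span {z ^ (g + 1)}))) := by
  set p : Ideal A := ker (LinearMap.lsmul A A (z ^ (g + 1))) with hp
  set BU : Ideal A := ker (LinearMap.lsmul A A (z ^ g)) ⊔ Ideal.span {z} with hBU
  set AW : Ideal A := ker (LinearMap.lsmul A A z) ⊓ Ideal.span {z ^ g} with hAW
  set BW : Ideal A := ker (LinearMap.lsmul A A z) ⊓ Ideal.span {z ^ (g + 1)} with hBW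
  have hkle : ker (LinearMap.lsmul A A (z ^ g)) ≤ p := by
    intro x hx
    rw [LinearMap.mem_ker, LinearMap.lsmul_apply, smul_eq_mul] at hx
    show x ∈ ker (LinearMap.lsmul A A (z ^ (g + 1)))
    rw [LinearMap.mem_ker, LinearMap.lsmul_apply, smul_eq_mul, pow_succ',
      mul_assoc, hx, mul_zero]
  have hAU : p ⊔ Ideal.span {z} = p ⊔ BU := by
    rw [hBU, ← sup_assoc, sup_eq_left.2 hkle]
  rw [hAU]
  have hpx : ∀ x : ↥p, z ^ (g + 1) * x.1 = 0 := by
    intro x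
    have h2 : (LinearMap.lsmul A A (z ^ (g + 1))) x.1 = 0 := LinearMap.mem_ker.1 x.2
    rwa [LinearMap.lsmul_apply, smul_eq_mul] at h2
  have hmem : ∀ x : ↥p, (LinearMap.lsmul A A (z ^ g)).comp p.subtype x ∈ AW := by
    intro x
    refine Submodule.mem_inf.2 ⟨?_, ?_⟩
    · rw [LinearMap.mem_ker]
      simp only [LinearMap.comp_apply, LinearMap.lsmul_apply, smul_eq_mul, Submodule.coe_subtype]
      rw [← mul_assoc, ← pow_succ']
      exact hpx x
    · simp only [LinearMap.comp_apply, LinearMap.lsmul_apply, smul_eq_mul, Submodule.coe_subtype]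
      exact Ideal.mem_span_singleton.2 (Dvd.intro _ rfl)
  let ψ₀ : ↥p →ₗ[A] ↥AW :=
    LinearMap.codRestrict AW ((LinearMap.lsmul A A (z ^ g)).comp p.subtype) hmem
  let ψ : ↥p →ₗ[A] (↥AW ⧸ Submodule.comap AW.subtype BW) :=
    (Submodule.mkQ (Submodule.comap AW.subtype BW)).comp ψ₀
  have hψ₀ : ∀ x : ↥p, (ψ₀ x : A) = z ^ g * x.1 := fun x => rfl
  have hsurj : Function.Surjective ψ := by
    intro q
    obtain ⟨w, rfl⟩ := Submodule.Quotient.mk_surjective _ q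
    have hw1 : z * w.1 = 0 := by
      have h2 : (LinearMap.lsmul A A z) w.1 = 0 := LinearMap.mem_ker.1 (Submodule.mem_inf.1 w.2).1
      rwa [LinearMap.lsmul_apply, smul_eq_mul] at h2
    obtain ⟨c, hc⟩ := Ideal.mem_span_singleton.1 (Submodule.mem_inf.1 w.2).2
    have hcp : c ∈ p := by
      show c ∈ ker (LinearMap.lsmul A A (z ^ (g + 1)))
      rw [LinearMap.mem_ker, LinearMap.lsmul_apply, smul_eq_mul, pow_succ', mul_assoc, ← hc, hw1]
    refine ⟨⟨c, hcp⟩, ?_⟩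
    have heq : ψ₀ ⟨c, hcp⟩ = w := Subtype.ext (by rw [hψ₀]; exact hc.symm)
    show Submodule.mkQ _ (ψ₀ ⟨c, hcp⟩) = Submodule.Quotient.mk w
    rw [heq, Submodule.mkQ_apply]
  have hker : ker ψ = Submodule.comap p.subtype (p ⊓ BU) := by
    ext x
    have hiff : ψ x = 0 ↔ z ^ g * x.1 ∈ BW := by
      show Submodule.mkQ _ (ψ₀ x) = 0 ↔ _
      rw [Submodule.mkQ_apply, Submodule.Quotient.mk_eq_zero, Submodule.mem_comap]
      constructor
      · intro h0; rw [← hψ₀ x]; exact h0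
      · intro h0; show (ψ₀ x : A) ∈ BW; rw [hψ₀ x]; exact h0
    rw [LinearMap.mem_ker, hiff, Submodule.mem_comap, Submodule.mem_inf]
    constructor
    · intro h0
      obtain ⟨c, hc⟩ := Ideal.mem_span_singleton.1 (Submodule.mem_inf.1 h0).2
      refine ⟨x.2, ?_⟩
      refine Submodule.mem_sup.2 ⟨x.1 - z * c, ?_, z * c,
        Ideal.mem_span_singleton.2 ⟨c, rfl⟩, by show x.1 - z * c + z * c = x.1; ring⟩
      rw [LinearMap.mem_ker, LinearMap.lsmul_apply, smul_eq_mul]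
      have hr : z ^ g * (x.1 - z * c) = z ^ g * x.1 - z ^ (g + 1) * c := by ring
      rw [hr, hc, sub_self]
    · rintro ⟨-, hxBU⟩
      obtain ⟨u, hu, v, hv, huv⟩ := Submodule.mem_sup.1 hxBU
      obtain ⟨c, hc⟩ := Ideal.mem_span_singleton.1 hv
      refine Submodule.mem_inf.2 ⟨?_, ?_⟩
      · rw [LinearMap.mem_ker, LinearMap.lsmul_apply, smul_eq_mul, ← mul_assoc, ← pow_succ']
        exact hpx x
      · have hu0 : z ^ g * u = 0 := by
          have h2 : (LinearMap.lsmul A A (z ^ g)) u = 0 := LinearMap.mem_ker.1 hu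
          rwa [LinearMap.lsmul_apply, smul_eq_mul] at h2
        have huv' : u + v = x.1 := huv
        show z ^ g * x.1 ∈ Ideal.span {z ^ (g + 1)}
        rw [← huv', mul_add, hu0, zero_add, hc]
        refine Ideal.mem_span_singleton.2 ⟨c, ?_⟩
        rw [pow_succ]
        ring
  exact ⟨((LinearMap.quotientInfEquivSupQuotient p BU).symm.trans
    ((Submodule.quotEquivOfEq _ _ hker.symm).trans (ψ.quotKerEquivOfSurjective hsurj)))⟩

end UW


/-- Let `A` be an Artinian Gorenstein `K`-algebra (finite-dimensional over
`K` and self-injective) and `z ∈ A` a non-unit, with `f₁ > ⋯ > f_s > 0` the distinct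
Jordan block sizes of `×z` (multiplicities `m₁, …, m_s`, encoded via ranks of powers).
With `U_i = (0:z^{f_i} + (z))/(0:z^{f_i−1} + (z))` and
`W_i = ((0:z) ∩ (z^{f_i−1}))/((0:z) ∩ (z^{f_i}))`, we have `Hom_A(U_i, A) ≅ W_i`,
`Hom_A(W_i, A) ≅ U_i`, and in particular `Hom_A(U_i, A) ≅ U_i`. -/
theorem gorenstein_duality_central_modules (K A : Type*) [Field K] [CommRing A]
    [Algebra K A] [FiniteDimensional K A] [Module.Injective A A]
    (z : A) (hz : ¬IsUnit z) (s : ℕ) (f m : Fin s → ℕ)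
    (hf : StrictAnti f) (hfpos : ∀ i, 0 < f i) (hmpos : ∀ i, 0 < m i)
    (hrank : ∀ k : ℕ,
      finrank K (LinearMap.range ((Algebra.lmul K A z) ^ k)) = ∑ i, m i * (f i - k)) :
    ∀ i : Fin s, ∀ AU BU AW BW : Ideal A,
      AU = ker (LinearMap.lsmul A A (z ^ f i)) ⊔ Ideal.span {z} →
      BU = ker (LinearMap.lsmul A A (z ^ (f i - 1))) ⊔ Ideal.span {z} →
      AW = ker (LinearMap.lsmul A A z) ⊓ Ideal.span {z ^ (f i - 1)} →
      BW = ker (LinearMap.lsmul A A z) ⊓ Ideal.span {z ^ f i} →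
      Nonempty (((AU ⧸ Submodule.comap AU.subtype BU) →ₗ[A] A) ≃ₗ[A] (AW ⧸ Submodule.comap AW.subtype BW)) ∧
      Nonempty (((AW ⧸ Submodule.comap AW.subtype BW) →ₗ[A] A) ≃ₗ[A] (AU ⧸ Submodule.comap AU.subtype BU)) ∧
      Nonempty (((AU ⧸ Submodule.comap AU.subtype BU) →ₗ[A] A) ≃ₗ[A] (AU ⧸ Submodule.comap AU.subtype BU)) := by
  intro i AU BU AW BW hAU hBU hAW hBW
  subst hAU hBU hAW hBW
  obtain ⟨g, hg⟩ : ∃ g, f i = g + 1 := ⟨f i - 1, (Nat.succ_pred_eq_of_pos (hfpos i)).symm⟩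
  have hg' : f i - 1 = g := by omega
  rw [hg', hg]
  have hkle : ker (LinearMap.lsmul A A (z ^ g)) ≤ ker (LinearMap.lsmul A A (z ^ (g + 1))) := by
    intro x hx
    rw [LinearMap.mem_ker, LinearMap.lsmul_apply, smul_eq_mul] at hx ⊢
    rw [pow_succ', mul_assoc, hx, mul_zero]
  have hle : (ker (LinearMap.lsmul A A (z ^ g)) ⊔ Ideal.span {z} : Ideal A) ≤
      ker (LinearMap.lsmul A A (z ^ (g + 1))) ⊔ Ideal.span {z} := sup_le_sup_right hkle _
  have E1 : (ker (LinearMap.lsmul A A z) ⊓ Ideal.span {z ^ g} : Ideal A) =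
      (ker (LinearMap.lsmul A A (z ^ g)) ⊔ Ideal.span {z} : Ideal A).annihilator := by
    rw [ann_sup, double_ann K, ann_span_singleton, inf_comm]
  have E2 : (ker (LinearMap.lsmul A A z) ⊓ Ideal.span {z ^ (g + 1)} : Ideal A) =
      (ker (LinearMap.lsmul A A (z ^ (g + 1))) ⊔ Ideal.span {z} : Ideal A).annihilator := by
    rw [ann_sup, double_ann K, ann_span_singleton, inf_comm]
  obtain ⟨uw⟩ := isoUW z g
  have H1 : Nonempty
      ((((ker (LinearMap.lsmul A A (z ^ (g + 1))) ⊔ Ideal.span {z} : Ideal A) ⧸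
          Submodule.comap (ker (LinearMap.lsmul A A (z ^ (g + 1))) ⊔ Ideal.span {z} : Ideal A).subtype
            (ker (LinearMap.lsmul A A (z ^ g)) ⊔ Ideal.span {z})) →ₗ[A] A) ≃ₗ[A]
        ((ker (LinearMap.lsmul A A z) ⊓ Ideal.span {z ^ g} : Ideal A) ⧸
          Submodule.comap (ker (LinearMap.lsmul A A z) ⊓ Ideal.span {z ^ g} : Ideal A).subtype
            (ker (LinearMap.lsmul A A z) ⊓ Ideal.span {z ^ (g + 1)}))) := by
    rw [E1, E2]
    exact dualIso _ _ hle
  obtain ⟨d1⟩ := H1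
  exact ⟨⟨d1⟩,
    ⟨((LinearEquiv.arrowCongr uw.symm (LinearEquiv.refl A A)).trans d1).trans uw.symm⟩,
    ⟨d1.trans uw.symm⟩⟩
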